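/- Let a < b, ρ ∈ (0,1), and let H : [a,b] → [0,∞) be strictly convex, strictly increasing and continuously differentiable, with H(a) = 0 and H'(a) < ρ. Suppose there exists z_ρ ∈ (a,b) with H'(z_ρ) = ρ. Define v(u) = H(u) for a ≤ u ≤ z_ρ and v(u) = ρ·(u − z_ρ) + H(z_ρ) for z_ρ ≤ u ≤ b. Then v is admissible, and v is the unique minimizer of K_{a,b} over all admissible functions. -/

import Mathlib

open MeasureTheory

/-- `h_ρ(z) = z log(z/ρ) + (1-z) log((1-z)/(1-ρ))` (with `0 log 0 = 0`,
which holds automatically since `Real.log 0 = 0`). -/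
noncomputable def hRho (ρ z : ℝ) : ℝ :=
  z * Real.log (z / ρ) + (1 - z) * Real.log ((1 - z) / (1 - ρ))

/-- `v` is admissible on `[a,b]` with obstacle `H`: differentiable on `[a,b]`,
`v a = 0`, `0 ≤ v' ≤ 1` on `[a,b]`, and `v ≤ H` on `[a,b]`. -/
def Admissible (a b : ℝ) (H v : ℝ → ℝ) : Prop :=
  DifferentiableOn ℝ v (Set.Icc a b) ∧ v a = 0 ∧
    (∀ u ∈ Set.Icc a b, derivWithin v (Set.Icc a b) u ∈ Set.Icc (0 : ℝ) 1) ∧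
    ∀ u ∈ Set.Icc a b, v u ≤ H u

/-- The cost `K_{a,b}(v) = ∫_a^b h_ρ(v'(u)) du`. -/
noncomputable def cost (ρ a b : ℝ) (v : ℝ → ℝ) : ℝ :=
  ∫ u in a..b, hRho ρ (derivWithin v (Set.Icc a b) u)

open Set

namespace Stmt3Aux


/-- binary entropy-like function -/
noncomputable def eent (z : ℝ) : ℝ := z * Real.log z + (1 - z) * Real.log (1 - z)

noncomputable def logit (ρ p : ℝ) : ℝ :=
  Real.log p - Real.log (1 - p) - Real.log ρ + Real.log (1 - ρ)

lemma hRho_eq {ρ : ℝ} (hρ0 : 0 < ρ) (hρ1 : ρ < 1) (z : ℝ) :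
    hRho ρ z = eent z - z * Real.log ρ - (1 - z) * Real.log (1 - ρ) := by
  have h1ρ : (1:ℝ) - ρ ≠ 0 := by linarith
  unfold hRho eent
  rcases eq_or_ne z 0 with rfl | hz
  · simp
  rcases eq_or_ne z 1 with rfl | hz1
  · rw [Real.log_div hz hρ0.ne']; simp
  · rw [Real.log_div hz hρ0.ne', Real.log_div (by intro h; apply hz1; linarith) h1ρ]
    ring

lemma continuous_eent : Continuous eent := by
  unfold eent
  exact (Real.continuous_mul_log).add
    ((Real.continuous_mul_log).comp (continuous_const.sub continuous_id))

lemma hasDerivAt_eent {z : ℝ} (h0 : 0 < z) (h1 : z < 1) :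
    HasDerivAt eent (Real.log z - Real.log (1 - z)) z := by
  have h1' : (1:ℝ) - z ≠ 0 := by linarith
  have d1 : HasDerivAt (fun x : ℝ => x * Real.log x) (Real.log z + 1) z :=
    Real.hasDerivAt_mul_log h0.ne'
  have d2 : HasDerivAt (fun x : ℝ => (1 - x) * Real.log (1 - x))
      ((Real.log (1 - z) + 1) * (-1)) z := by
    have : HasDerivAt (fun x : ℝ => (1:ℝ) - x) (-1) z := by
      simpa using (hasDerivAt_id z).const_sub 1
    exact (Real.hasDerivAt_mul_log h1').comp z this
  have := d1.add d2
  rw [show (Real.log z - Real.log (1 - z)) = Real.log z + 1 + (Real.log (1 - z) + 1) * -1 by ring]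
  exact this

/-- strict tangent-line inequality for `eent` -/
lemma eent_tangent_lt {p z : ℝ} (hp : p ∈ Ioo (0:ℝ) 1) (hz : z ∈ Icc (0:ℝ) 1) (hne : z ≠ p) :
    eent p + (Real.log p - Real.log (1 - p)) * (z - p) < eent z := by
  obtain ⟨hp0, hp1⟩ := hp
  obtain ⟨hz0, hz1⟩ := hz
  set L : ℝ := Real.log p - Real.log (1 - p) with hL
  set F : ℝ → ℝ := fun x => eent x - L * x with hF
  have hFc : Continuous F := continuous_eent.sub (continuous_const.mul continuous_id)
  have hFd : ∀ x ∈ Ioo (0:ℝ) 1, HasDerivAt F (Real.log x - Real.log (1 - x) - L) x := by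
    intro x hx
    exact (hasDerivAt_eent hx.1 hx.2).sub (by simpa using (hasDerivAt_id x).const_mul L)
  have key : F p < F z := by
    rcases lt_or_gt_of_ne hne with hlt | hgt
    · -- z < p : F strictly antitone on [0,p]
      have anti : StrictAntiOn F (Icc 0 p) := by
        apply strictAntiOn_of_deriv_neg (convex_Icc 0 p) (hFc.continuousOn)
        intro x hx
        rw [interior_Icc] at hx
        obtain ⟨hxa, hxb⟩ := hx
        have hx1 : x < 1 := lt_trans hxb hp1
        rw [(hFd x ⟨hxa, hx1⟩).deriv]
        have h1 : Real.log x < Real.log p := Real.log_lt_log hxa hxb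
        have h2 : Real.log (1 - p) < Real.log (1 - x) :=
          Real.log_lt_log (by linarith) (by linarith)
        simp only [hL]; linarith
      exact anti ⟨hz0, hlt.le⟩ ⟨hp0.le, le_rfl⟩ hlt
    · -- p < z : F strictly mono on [p,1]
      have mono : StrictMonoOn F (Icc p 1) := by
        apply strictMonoOn_of_deriv_pos (convex_Icc p 1) (hFc.continuousOn)
        intro x hx
        rw [interior_Icc] at hx
        obtain ⟨hxa, hxb⟩ := hx
        have hx0 : 0 < x := lt_trans hp0 hxa
        rw [(hFd x ⟨hx0, hxb⟩).deriv]
        have h1 : Real.log p < Real.log x := Real.log_lt_log hp0 hxa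
        have h2 : Real.log (1 - x) < Real.log (1 - p) :=
          Real.log_lt_log (by linarith) (by linarith)
        simp only [hL]; linarith
      exact mono ⟨le_rfl, hp1.le⟩ ⟨hgt.le, hz1⟩ hgt
  have : eent p - L * p < eent z - L * z := key
  nlinarith [this]



/-- strict tangent inequality for hRho -/
lemma hRho_tangent_lt {ρ p z : ℝ} (hρ0 : 0 < ρ) (hρ1 : ρ < 1)
    (hp : p ∈ Ioo (0:ℝ) 1) (hz : z ∈ Icc (0:ℝ) 1) (hne : z ≠ p) :
    hRho ρ p + logit ρ p * (z - p) < hRho ρ z := by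
  have h := eent_tangent_lt hp hz hne
  rw [hRho_eq hρ0 hρ1, hRho_eq hρ0 hρ1]
  unfold logit
  nlinarith [h]

lemma hRho_tangent_le {ρ p z : ℝ} (hρ0 : 0 < ρ) (hρ1 : ρ < 1)
    (hp : p ∈ Ioo (0:ℝ) 1) (hz : z ∈ Icc (0:ℝ) 1) :
    hRho ρ p + logit ρ p * (z - p) ≤ hRho ρ z := by
  rcases eq_or_ne z p with rfl | hne
  · simp
  · exact (hRho_tangent_lt hρ0 hρ1 hp hz hne).le

lemma hRho_self (ρ : ℝ) (hρ0 : 0 < ρ) (hρ1 : ρ < 1) : hRho ρ ρ = 0 := by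
  unfold hRho
  rw [div_self hρ0.ne', div_self (by linarith : (1:ℝ) - ρ ≠ 0)]
  simp

lemma logit_self (ρ : ℝ) : logit ρ ρ = 0 := by unfold logit; ring

lemma hRho_nonneg {ρ z : ℝ} (hρ0 : 0 < ρ) (hρ1 : ρ < 1) (hz : z ∈ Icc (0:ℝ) 1) :
    0 ≤ hRho ρ z := by
  rcases eq_or_ne z ρ with rfl | hne
  · exact (hRho_self _ hρ0 hρ1).ge
  · have := hRho_tangent_lt hρ0 hρ1 ⟨hρ0, hρ1⟩ hz hne
    rw [hRho_self _ hρ0 hρ1, logit_self] at this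
    linarith

lemma hRho_pos {ρ z : ℝ} (hρ0 : 0 < ρ) (hρ1 : ρ < 1) (hz : z ∈ Icc (0:ℝ) 1) (hne : z ≠ ρ) :
    0 < hRho ρ z := by
  have := hRho_tangent_lt hρ0 hρ1 ⟨hρ0, hρ1⟩ hz hne
  rw [hRho_self _ hρ0 hρ1, logit_self] at this
  linarith

lemma mul_log_mem {x : ℝ} (h0 : 0 ≤ x) (h1 : x ≤ 1) :
    x * Real.log x ∈ Icc (-1 : ℝ) 0 := by
  rcases eq_or_lt_of_le h0 with rfl | hx
  · simp
  constructor
  · have := Real.log_le_sub_one_of_pos (inv_pos.mpr hx)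
    rw [Real.log_inv] at this
    have h2 : -Real.log x ≤ x⁻¹ - 1 := this
    nlinarith [mul_le_mul_of_nonneg_left h2 hx.le, mul_inv_cancel₀ hx.ne']
  · have : Real.log x ≤ 0 := Real.log_nonpos h0 h1
    exact mul_nonpos_of_nonneg_of_nonpos hx.le this

lemma abs_hRho_le {ρ z : ℝ} (hρ0 : 0 < ρ) (hρ1 : ρ < 1) (hz : z ∈ Icc (0:ℝ) 1) :
    |hRho ρ z| ≤ 2 - Real.log ρ - Real.log (1 - ρ) := by
  obtain ⟨hz0, hz1⟩ := hz
  have e1 := mul_log_mem hz0 hz1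
  have e2 := mul_log_mem (by linarith : (0:ℝ) ≤ 1 - z) (by linarith)
  have lρ : Real.log ρ ≤ 0 := Real.log_nonpos hρ0.le hρ1.le
  have lρ' : Real.log (1 - ρ) ≤ 0 := Real.log_nonpos (by linarith) (by linarith)
  rw [hRho_eq hρ0 hρ1, abs_le]
  unfold eent
  constructor <;> nlinarith [e1.1, e1.2, e2.1, e2.2,
    mul_nonneg hz0 (neg_nonneg.mpr lρ), mul_nonneg (by linarith : (0:ℝ) ≤ 1 - z) (neg_nonneg.mpr lρ')]

lemma continuous_hRho {ρ : ℝ} (hρ0 : 0 < ρ) (hρ1 : ρ < 1) : Continuous (hRho ρ) := by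
  have : hRho ρ = fun z => eent z - z * Real.log ρ - (1 - z) * Real.log (1 - ρ) := by
    funext z; exact hRho_eq hρ0 hρ1 z
  rw [this]
  exact (continuous_eent.sub (continuous_id.mul continuous_const)).sub
    ((continuous_const.sub continuous_id).mul continuous_const)



lemma stieltjes_ibp_ineq {c d : ℝ} (hcd : c < d) (Ψ : StieltjesFunction ℝ) (hΨd : Ψ d = 0)
    {f f' g : ℝ → ℝ} (hf : ContinuousOn f (Icc c d))
    (hf' : ∀ x ∈ Ioo c d, HasDerivAt f (f' x) x)
    (hg : Measurable g) (hgbd : ∀ x, |g x| ≤ 1)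
    (hfg : f' =ᵐ[volume.restrict (Ioo c d)] g)
    (hfneg : ∀ x ∈ Icc c d, f x ≤ 0) :
    Ψ c * (- f c) ≤ ∫ u in Ioo c d, Ψ u * f' u := by
  set μ := Ψ.measure.restrict (Ioc c d) with hμ
  haveI hμfin : IsFiniteMeasure μ := by
    constructor
    rw [hμ, Measure.restrict_apply_univ, Ψ.measure_Ioc]
    exact ENNReal.ofReal_lt_top
  haveI hνfin : IsFiniteMeasure (volume.restrict (Ioo c d)) := by
    constructor
    rw [Measure.restrict_apply_univ]
    exact measure_Ioo_lt_top
  have hμtot : (μ Set.univ).toReal = - Ψ c := by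
    rw [hμ, Measure.restrict_apply_univ, Ψ.measure_Ioc, ENNReal.toReal_ofReal (by
      have := Ψ.mono hcd.le; linarith), hΨd]
    ring
  -- the value formula
  have hval : ∀ u ∈ Icc c d, Ψ u = -(μ (Ioi u)).toReal := by
    intro u hu
    have hset : Ioi u ∩ Ioc c d = Ioc u d := by
      ext x
      simp only [mem_inter_iff, mem_Ioi, mem_Ioc]
      constructor
      · rintro ⟨h1, _, h3⟩; exact ⟨h1, h3⟩
      · rintro ⟨h1, h2⟩; exact ⟨h1, lt_of_le_of_lt hu.1 h1, h2⟩
    rw [hμ, Measure.restrict_apply measurableSet_Ioi, hset, Ψ.measure_Ioc,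
      ENNReal.toReal_ofReal (by have := Ψ.mono hu.2; linarith), hΨd]
    ring
  set A : ℝ → ℝ := fun u => (μ (Ioi u)).toReal with hA
  have hAanti : Antitone A := by
    intro u v huv
    exact ENNReal.toReal_mono (measure_ne_top μ _) (measure_mono (Ioi_subset_Ioi huv))
  have hAmeas : Measurable A := hAanti.measurable
  -- rewrite the integral
  have step1 : ∫ u in Ioo c d, Ψ u * f' u = ∫ u in Ioo c d, Ψ u * g u := by
    apply integral_congr_ae
    filter_upwards [hfg] with x hx
    rw [hx]
  have step2 : ∫ u in Ioo c d, Ψ u * g u = - ∫ u in Ioo c d, A u * g u := by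
    rw [← integral_neg]
    apply setIntegral_congr_fun measurableSet_Ioo
    intro u hu
    show (Ψ u) * g u = -(A u * g u)
    rw [hval u ⟨hu.1.le, hu.2.le⟩]
    ring
  -- Fubini setup
  set F : ℝ → ℝ → ℝ := fun u t => if u < t then g u else 0 with hF
  have hFmeas : Measurable (Function.uncurry F) := by
    apply Measurable.ite (measurableSet_lt measurable_fst measurable_snd)
      (hg.comp measurable_fst) measurable_const
  have hFbd : ∀ p : ℝ × ℝ, ‖Function.uncurry F p‖ ≤ 1 := by
    rintro ⟨u, t⟩
    simp only [Function.uncurry, hF]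
    split
    · exact hgbd u
    · simp
  have hFint : Integrable (Function.uncurry F) ((volume.restrict (Ioo c d)).prod μ) :=
    Integrable.mono' (integrable_const 1) hFmeas.aestronglyMeasurable
      (Filter.Eventually.of_forall hFbd)
  have inner_t : ∀ u : ℝ, ∫ t, F u t ∂μ = A u * g u := by
    intro u
    have : (fun t => F u t) = (Ioi u).indicator (fun _ => g u) := by
      funext t
      simp [hF, Set.indicator_apply]
    rw [this, integral_indicator_const _ measurableSet_Ioi]
    simp [hA, mul_comm, measureReal_def]
  have swap : ∫ u in Ioo c d, A u * g u = ∫ t, (∫ u in Ioo c d, F u t) ∂μ := by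
    rw [← integral_integral_swap hFint]
    exact integral_congr_ae (Filter.Eventually.of_forall fun u => (inner_t u).symm)
  -- inner integral in u via FTC
  have inner_u : ∀ t ∈ Ioc c d, ∫ u in Ioo c d, F u t = f t - f c := by
    intro t ht
    have hsub : Ioo c t ⊆ Ioo c d := Ioo_subset_Ioo le_rfl ht.2
    have hgint : IntegrableOn g (Ioo c t) := by
      haveI : IsFiniteMeasure (volume.restrict (Ioo c t)) := by
        constructor; rw [Measure.restrict_apply_univ]; exact measure_Ioo_lt_top
      exact Integrable.mono' (integrable_const 1) hg.aestronglyMeasurable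
        (Filter.Eventually.of_forall fun x => hgbd x)
    have hfg' : f' =ᵐ[volume.restrict (Ioo c t)] g :=
      ae_restrict_of_ae_restrict_of_subset hsub hfg
    have hf'int : IntervalIntegrable f' volume c t := by
      rw [intervalIntegrable_iff_integrableOn_Ioo_of_le ht.1.le]
      exact hgint.congr hfg'.symm
    have ftc : ∫ u in c..t, f' u = f t - f c := by
      apply intervalIntegral.integral_eq_sub_of_hasDeriv_right_of_le ht.1.le
        (hf.mono (Icc_subset_Icc le_rfl ht.2))
        (fun x hx => (hf' x (hsub hx)).hasDerivWithinAt) hf'int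
    have e1 : (fun u => F u t) = (Iio t).indicator g := by
      funext u
      simp [hF, Set.indicator_apply, lt_iff_lt_of_le_iff_le]
    calc ∫ u in Ioo c d, F u t = ∫ u in Ioo c d, (Iio t).indicator g u := by rw [e1]
      _ = ∫ u in Iio t ∩ Ioo c d, g u := by
          rw [integral_indicator measurableSet_Iio, Measure.restrict_restrict measurableSet_Iio]
      _ = ∫ u in Ioo c t, g u := by
          have hseteq : Iio t ∩ Ioo c d = Ioo c t := by
            ext x
            simp only [mem_inter_iff, mem_Ioo, mem_Iio]
            constructor
            · rintro ⟨h3, h1, _⟩; exact ⟨h1, h3⟩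
            · rintro ⟨h1, h2⟩; exact ⟨h2, h1, h2.trans_le ht.2⟩
          rw [hseteq]
      _ = ∫ u in Ioo c t, f' u := integral_congr_ae (by filter_upwards [hfg'] with x hx; rw [hx])
      _ = ∫ u in c..t, f' u := by
          rw [intervalIntegral.integral_of_le ht.1.le, integral_Ioc_eq_integral_Ioo]
      _ = f t - f c := ftc
  -- f integrable wrt μ
  have hfmeas : AEStronglyMeasurable f μ :=
    (hf.mono Ioc_subset_Icc_self).aestronglyMeasurable measurableSet_Ioc
  obtain ⟨M, hM⟩ := isCompact_Icc.exists_bound_of_continuousOn hf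
  have hfint : Integrable f μ := by
    apply Integrable.mono' (integrable_const M) hfmeas
    rw [hμ]
    filter_upwards [ae_restrict_mem measurableSet_Ioc] with x hx
    exact hM x (Ioc_subset_Icc_self hx)
  have step3 : ∫ t, (∫ u in Ioo c d, F u t) ∂μ = ∫ t, f t ∂μ - f c * (μ Set.univ).toReal := by
    have : ∫ t, (∫ u in Ioo c d, F u t) ∂μ = ∫ t, (f t - f c) ∂μ := by
      apply integral_congr_ae
      rw [hμ]
      filter_upwards [ae_restrict_mem measurableSet_Ioc] with t ht
      rw [← hμ] at *
      exact inner_u t ht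
    rw [this, integral_sub hfint (integrable_const _), integral_const]
    simp [mul_comm, measureReal_def]
  have hfnonpos : ∫ t, f t ∂μ ≤ 0 := by
    apply integral_nonpos_of_ae
    rw [hμ]
    filter_upwards [ae_restrict_mem measurableSet_Ioc] with t ht
    exact hfneg t (Ioc_subset_Icc_self ht)
  rw [step1, step2, swap, step3, hμtot]
  nlinarith [hfnonpos]


end Stmt3Aux

open Stmt3Aux

set_option maxHeartbeats 2000000 in
theorem stmt3 (a b ρ zρ : ℝ) (H : ℝ → ℝ) (hab : a < b) (hρ0 : 0 < ρ) (hρ1 : ρ < 1)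
    (hH0 : ∀ u ∈ Set.Icc a b, 0 ≤ H u)
    (hHconv : StrictConvexOn ℝ (Set.Icc a b) H)
    (hHmono : StrictMonoOn H (Set.Icc a b))
    (hHC1 : ContDiffOn ℝ 1 H (Set.Icc a b))
    (hHa : H a = 0)
    (hHa' : derivWithin H (Set.Icc a b) a < ρ)
    (hz : zρ ∈ Set.Ioo a b)
    (hz' : derivWithin H (Set.Icc a b) zρ = ρ) :
    Admissible a b H (fun u => if u ≤ zρ then H u else ρ * (u - zρ) + H zρ) ∧
    ∀ w : ℝ → ℝ, Admissible a b H w →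
      (∃ u ∈ Set.Icc a b, w u ≠ (if u ≤ zρ then H u else ρ * (u - zρ) + H zρ)) →
      cost ρ a b (fun u => if u ≤ zρ then H u else ρ * (u - zρ) + H zρ) < cost ρ a b w := by
  obtain ⟨hza, hzb⟩ := hz
  set s : Set ℝ := Set.Icc a b with hs
  have ha : a ∈ s := ⟨le_rfl, hab.le⟩
  have hbmem : b ∈ s := ⟨hab.le, le_rfl⟩
  have hzs : zρ ∈ s := ⟨hza.le, hzb.le⟩
  have hUD : UniqueDiffOn ℝ s := uniqueDiffOn_Icc hab
  have hHdiff : DifferentiableOn ℝ H s := hHC1.differentiableOn one_ne_zero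
  set φH : ℝ → ℝ := derivWithin H s with hφH
  have hφcont : ContinuousOn φH s := hHC1.continuousOn_derivWithin hUD le_rfl
  have hφsm : StrictMonoOn φH s := hHconv.strictMonoOn_derivWithin hHdiff
  have hφmono : MonotoneOn φH s := hHconv.convexOn.monotoneOn_derivWithin hHdiff
  -- nonnegativity of φH at a
  have hφa0 : 0 ≤ φH a := by
    have h1 : Filter.Tendsto (slope H a) (nhdsWithin a (s \ {a})) (nhds (φH a)) :=
      hasDerivWithinAt_iff_tendsto_slope.mp (hHdiff a ha).hasDerivWithinAt
    have hseq : s \ {a} = Ioc a b := by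
      ext x
      simp only [hs, mem_diff, mem_Icc, mem_singleton_iff, mem_Ioc]
      constructor
      · rintro ⟨⟨h1, h2⟩, h3⟩; exact ⟨lt_of_le_of_ne h1 (Ne.symm h3), h2⟩
      · rintro ⟨h1, h2⟩; exact ⟨⟨h1.le, h2⟩, h1.ne'⟩
    rw [hseq] at h1
    haveI : (nhdsWithin a (Ioc a b)).NeBot := by
      refine Filter.NeBot.mono ?_ (nhdsWithin_mono a Ioo_subset_Ioc_self)
      exact mem_closure_iff_nhdsWithin_neBot.mp (by
        rw [closure_Ioo hab.ne]; exact left_mem_Icc.mpr hab.le)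
    refine ge_of_tendsto h1 ?_
    filter_upwards [self_mem_nhdsWithin] with y hy
    rw [slope_def_field]
    apply div_nonneg _ (by linarith [hy.1] : (0:ℝ) ≤ y - a)
    have := hHmono ha ⟨hy.1.le, hy.2⟩ hy.1
    linarith
  have hφnonneg : ∀ u ∈ s, 0 ≤ φH u := fun u hu =>
    hφa0.trans (hφmono ha hu hu.1)
  have hφpos : ∀ u ∈ Ioc a b, 0 < φH u := fun u hu =>
    lt_of_le_of_lt hφa0 (hφsm ha ⟨hu.1.le, hu.2⟩ hu.1)
  have hφle : ∀ u ∈ s, u ≤ zρ → φH u ≤ ρ := by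
    intro u hu huz
    rw [← hz']
    exact hφmono hu hzs huz
  -- the candidate and its derivative
  set v : ℝ → ℝ := fun u => if u ≤ zρ then H u else ρ * (u - zρ) + H zρ with hv
  set V : ℝ → ℝ := fun u => if u ≤ zρ then φH u else ρ with hV
  have hlinD : ∀ u : ℝ, HasDerivAt (fun x => ρ * (x - zρ) + H zρ) ρ u := by
    intro u
    simpa using (((hasDerivAt_id u).sub_const zρ).const_mul ρ).add_const (H zρ)
  have hvd : ∀ u ∈ s, HasDerivWithinAt v (V u) s u := by
    intro u hu
    rcases lt_trichotomy u zρ with hlt | heq | hgt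
    · have hH' : HasDerivWithinAt H (φH u) s u := (hHdiff u hu).hasDerivWithinAt
      have hev : v =ᶠ[nhdsWithin u s] H := by
        have : Iio zρ ∈ nhds u := Iio_mem_nhds hlt
        filter_upwards [nhdsWithin_le_nhds this] with x hx
        have hxz : x ≤ zρ := (mem_Iio.mp hx).le
        simp [hv, hxz]
      have : HasDerivWithinAt v (φH u) s u :=
        hH'.congr_of_eventuallyEq hev (by simp [hv, hlt.le])
      simpa [hV, hlt.le] using this
    · have h1 : HasDerivWithinAt v ρ (Icc a zρ) zρ := by
        have hH' : HasDerivWithinAt H ρ (Icc a zρ) zρ := by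
          have h := (hHdiff zρ hzs).hasDerivWithinAt.mono
            (Icc_subset_Icc le_rfl hzb.le : Icc a zρ ⊆ s)
          rwa [← hφH, hz'] at h
        exact hH'.congr (fun x hx => by simp [hv, hx.2]) (by simp [hv])
      have h2 : HasDerivWithinAt v ρ (Icc zρ b) zρ := by
        refine ((hlinD zρ).hasDerivWithinAt).congr (fun x hx => ?_) (by simp [hv])
        rcases eq_or_lt_of_le hx.1 with rfl | hxz
        · simp [hv]
        · simp [hv, not_le.mpr hxz]
      have h3 := h1.union h2
      rw [Icc_union_Icc_eq_Icc hza.le hzb.le] at h3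
      have hVz : V u = ρ := by rw [heq]; simp [hV, hz']
      rw [hVz, heq]
      exact h3
    · have hl : HasDerivWithinAt (fun x => ρ * (x - zρ) + H zρ) ρ s u :=
        (hlinD u).hasDerivWithinAt
      have hev : v =ᶠ[nhdsWithin u s] (fun x => ρ * (x - zρ) + H zρ) := by
        have : Ioi zρ ∈ nhds u := Ioi_mem_nhds hgt
        filter_upwards [nhdsWithin_le_nhds this] with x hx
        simp [hv, not_le.mpr (mem_Ioi.mp hx)]
      have : HasDerivWithinAt v ρ s u :=
        hl.congr_of_eventuallyEq hev (by simp [hv, not_le.mpr hgt])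
      simpa [hV, not_le.mpr hgt] using this
  have hvdiff : DifferentiableOn ℝ v s := fun u hu => (hvd u hu).differentiableWithinAt
  have hvD : ∀ u ∈ s, derivWithin v s u = V u := fun u hu =>
    (hvd u hu).derivWithin (hUD u hu)
  have hVmem : ∀ u ∈ s, V u ∈ Icc (0:ℝ) 1 := by
    intro u hu
    by_cases huz : u ≤ zρ
    · simp only [hV, if_pos huz]
      exact ⟨hφnonneg u hu, (hφle u hu huz).trans hρ1.le⟩
    · simp only [hV, if_neg huz]
      exact ⟨hρ0.le, hρ1.le⟩
  have hgeH : ∀ u ∈ s, zρ < u → ρ * (u - zρ) + H zρ ≤ H u := by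
    intro u hu hzu
    have hslope : φH zρ ≤ slope H zρ u :=
      hHconv.convexOn.derivWithin_le_slope hzs hu hzu (hHdiff zρ hzs)
    rw [slope_def_field] at hslope
    rw [hz'] at hslope
    have h2 : ρ * (u - zρ) ≤ H u - H zρ := by
      have := mul_le_mul_of_nonneg_right hslope (by linarith : (0:ℝ) ≤ u - zρ)
      rwa [div_mul_cancel₀] at this
      linarith
    linarith
  have hvleH : ∀ u ∈ s, v u ≤ H u := by
    intro u hu
    by_cases huz : u ≤ zρ
    · simp [hv, huz]
    · push_neg at huz
      simpa [hv, not_le.mpr huz] using hgeH u hu huz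
  have hAdm : Admissible a b H v := by
    refine ⟨hvdiff, by simp [hv, hza.le, hHa], fun u hu => ?_, hvleH⟩
    rw [hvD u hu]
    exact hVmem u hu
  refine ⟨hAdm, ?_⟩
  rintro w ⟨hwdiff, hwa, hwD, hwle⟩ ⟨u₀, hu₀s, hu₀ne⟩
  by_contra hcon0
  have hcon : cost ρ a b w ≤ cost ρ a b v := not_lt.mp hcon0
  clear hcon0
  set M : ℝ := 2 - Real.log ρ - Real.log (1 - ρ) with hMdef
  set K₀ : ℝ := - Real.log (1 - ρ) with hK₀def
  have hK₀0 : 0 ≤ K₀ := by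
    rw [hK₀def, neg_nonneg]
    exact Real.log_nonpos (by linarith) (by linarith)
  set Dw : ℝ → ℝ := derivWithin w s with hDw
  have hDwmem : ∀ u ∈ s, Dw u ∈ Icc (0:ℝ) 1 := hwD
  have hwHD : ∀ u ∈ Ioo a b, HasDerivAt w (Dw u) u ∧ deriv w u = Dw u := by
    intro u hu
    have hnb : s ∈ nhds u := Icc_mem_nhds hu.1 hu.2
    have hd : DifferentiableAt ℝ w u :=
      (hwdiff u (Ioo_subset_Icc_self hu)).differentiableAt hnb
    have he : derivWithin w s u = deriv w u := derivWithin_of_mem_nhds hnb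
    exact ⟨by rw [hDw, he]; exact hd.hasDerivAt, he.symm⟩
  have hvHD : ∀ u ∈ Ioo a b, HasDerivAt v (V u) u ∧ deriv v u = V u := by
    intro u hu
    have hnb : s ∈ nhds u := Icc_mem_nhds hu.1 hu.2
    have hd : DifferentiableAt ℝ v u :=
      (hvdiff u (Ioo_subset_Icc_self hu)).differentiableAt hnb
    have he : deriv v u = V u := by
      rw [← derivWithin_of_mem_nhds hnb, hvD u (Ioo_subset_Icc_self hu)]
    exact ⟨he ▸ hd.hasDerivAt, he⟩
  have hφHD : ∀ u ∈ Ioo a b, HasDerivAt H (φH u) u ∧ deriv H u = φH u := by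
    intro u hu
    have hnb : s ∈ nhds u := Icc_mem_nhds hu.1 hu.2
    have hd : DifferentiableAt ℝ H u :=
      (hHdiff u (Ioo_subset_Icc_self hu)).differentiableAt hnb
    have he : derivWithin H s u = deriv H u := derivWithin_of_mem_nhds hnb
    exact ⟨by rw [hφH, he]; exact hd.hasDerivAt, he.symm⟩
  have hwmono : MonotoneOn w s := by
    apply monotoneOn_of_deriv_nonneg (convex_Icc a b) hwdiff.continuousOn
    · rw [interior_Icc]
      exact fun x hx => ((hwdiff x (Ioo_subset_Icc_self hx)).differentiableAt
        (Icc_mem_nhds hx.1 hx.2)).differentiableWithinAt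
    · rw [interior_Icc]
      intro x hx
      rw [(hwHD x hx).2]
      exact (hDwmem x (Ioo_subset_Icc_self hx)).1
  have hw0 : ∀ u ∈ s, 0 ≤ w u := by
    intro u hu
    have := hwmono ha hu hu.1
    rw [hwa] at this
    exact this
  -- interval integrability of hRho ∘ Dw
  have hIIw : ∀ x y, a ≤ x → x ≤ y → y ≤ b →
      IntervalIntegrable (fun u => hRho ρ (Dw u)) volume x y := by
    intro x y hax hxy hyb
    rw [intervalIntegrable_iff_integrableOn_Ioc_of_le hxy, integrableOn_Ioc_iff_integrableOn_Ioo]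
    have hmeas : AEStronglyMeasurable (fun u => hRho ρ (Dw u)) (volume.restrict (Ioo x y)) := by
      have h1 : AEStronglyMeasurable (fun u => hRho ρ (deriv w u)) (volume.restrict (Ioo x y)) :=
        (((continuous_hRho hρ0 hρ1).measurable).comp (measurable_deriv w)).aestronglyMeasurable
      apply h1.congr
      filter_upwards [ae_restrict_mem measurableSet_Ioo] with u hu
      have hu' : u ∈ Ioo a b := ⟨lt_of_le_of_lt hax hu.1, lt_of_lt_of_le hu.2 hyb⟩
      rw [(hwHD u hu').2]
    apply Integrable.mono' (integrableOn_const (C := 2 - Real.log ρ - Real.log (1 - ρ)) measure_Ioo_lt_top.ne) hmeas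
    filter_upwards [ae_restrict_mem measurableSet_Ioo] with u hu
    have hu' : u ∈ s := ⟨hax.trans hu.1.le, hu.2.le.trans hyb⟩
    rw [Real.norm_eq_abs]
    exact abs_hRho_le hρ0 hρ1 (hDwmem u hu')
  -- continuity of hRho ∘ φH
  have hgφcont : ContinuousOn (fun u => hRho ρ (φH u)) s :=
    (continuous_hRho hρ0 hρ1).comp_continuousOn hφcont
  -- cost of v
  have hcostv : cost ρ a b v = ∫ u in a..zρ, hRho ρ (φH u) := by
    have h1 : cost ρ a b v = ∫ u in a..b, hRho ρ (V u) :=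
      intervalIntegral.integral_congr (fun u hu => by
        rw [uIcc_of_le hab.le] at hu
        rw [hvD u hu])
    have hz1 : EqOn (fun u => hRho ρ (V u)) (fun u => hRho ρ (φH u)) (uIcc a zρ) := by
      intro u hu
      rw [uIcc_of_le hza.le] at hu
      simp only [hV, if_pos hu.2]
    have hz2 : EqOn (fun u => hRho ρ (V u)) (fun _ => (0:ℝ)) (uIcc zρ b) := by
      intro u hu
      rw [uIcc_of_le hzb.le] at hu
      by_cases huz : u ≤ zρ
      · have : u = zρ := le_antisymm huz hu.1
        simp only [hV, this, if_pos le_rfl, hz']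
        exact hRho_self ρ hρ0 hρ1
      · simp only [hV, if_neg huz]
        exact hRho_self ρ hρ0 hρ1
    have hIa : IntervalIntegrable (fun u => hRho ρ (V u)) volume a zρ := by
      apply ContinuousOn.intervalIntegrable
      exact ContinuousOn.congr ((hgφcont.mono (by
        rw [uIcc_of_le hza.le]; exact Icc_subset_Icc le_rfl hzb.le))) hz1
    have hIb : IntervalIntegrable (fun u => hRho ρ (V u)) volume zρ b := by
      apply ContinuousOn.intervalIntegrable
      exact ContinuousOn.congr continuousOn_const hz2
    rw [h1, ← intervalIntegral.integral_add_adjacent_intervals hIa hIb]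
    have e1 : ∫ u in a..zρ, hRho ρ (V u) = ∫ u in a..zρ, hRho ρ (φH u) :=
      intervalIntegral.integral_congr hz1
    have e2 : ∫ u in zρ..b, hRho ρ (V u) = 0 := by
      rw [intervalIntegral.integral_congr hz2]
      simp
    rw [e1, e2, add_zero]
  -- cost of w splits
  have hcostw : ∀ c ∈ Ioo a zρ, cost ρ a b w =
      (∫ u in a..c, hRho ρ (Dw u)) + (∫ u in c..zρ, hRho ρ (Dw u))
        + (∫ u in zρ..b, hRho ρ (Dw u)) := by
    intro c hc
    have h1 := intervalIntegral.integral_add_adjacent_intervals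
      (hIIw a c le_rfl hc.1.le (hc.2.le.trans hzb.le))
      (hIIw c zρ hc.1.le hc.2.le hzb.le)
    have h2 := intervalIntegral.integral_add_adjacent_intervals
      (hIIw a zρ le_rfl hza.le hzb.le) (hIIw zρ b hza.le hzb.le le_rfl)
    rw [h1, h2]
    rfl
  set B : ℝ := ∫ u in zρ..b, hRho ρ (Dw u) with hBdef
  have hB0 : 0 ≤ B :=
    intervalIntegral.integral_nonneg hzb.le (fun u hu =>
      hRho_nonneg hρ0 hρ1 (hDwmem u ⟨hza.le.trans hu.1, hu.2⟩))
  set G : ℝ → ℝ := fun u =>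
    hRho ρ (Dw u) - hRho ρ (φH u) - logit ρ (φH u) * (Dw u - φH u) with hGdef
  have hφmem : ∀ u ∈ Ioc a zρ, φH u ∈ Ioo (0:ℝ) 1 := by
    intro u hu
    have hus : u ∈ s := ⟨hu.1.le, hu.2.trans hzb.le⟩
    exact ⟨hφpos u ⟨hu.1, hu.2.trans hzb.le⟩, lt_of_le_of_lt (hφle u hus hu.2) hρ1⟩
  have hG0 : ∀ u ∈ Ioc a zρ, 0 ≤ G u := by
    intro u hu
    have hus : u ∈ s := ⟨hu.1.le, hu.2.trans hzb.le⟩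
    have := hRho_tangent_le hρ0 hρ1 (hφmem u hu) (hDwmem u hus)
    simp only [hGdef]
    linarith
  have hGpos : ∀ u ∈ Ioc a zρ, Dw u ≠ φH u → 0 < G u := by
    intro u hu hne
    have hus : u ∈ s := ⟨hu.1.le, hu.2.trans hzb.le⟩
    have := hRho_tangent_lt hρ0 hρ1 (hφmem u hu) (hDwmem u hus) hne
    simp only [hGdef]
    linarith
  -- continuity of logit ∘ φH on compact subintervals away from a
  have hψcont : ∀ x, a < x → ContinuousOn (fun u => logit ρ (φH u)) (Icc x zρ) := by
    intro x hx
    have hsub : Icc x zρ ⊆ s := Icc_subset_Icc hx.le hzb.le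
    have hφc : ContinuousOn φH (Icc x zρ) := hφcont.mono hsub
    have hpos : ∀ u ∈ Icc x zρ, φH u ≠ 0 := fun u hu =>
      (hφpos u ⟨hx.trans_le hu.1, hu.2.trans hzb.le⟩).ne'
    have hlt1 : ∀ u ∈ Icc x zρ, (1:ℝ) - φH u ≠ 0 := by
      intro u hu
      have := (hφmem u ⟨hx.trans_le hu.1, hu.2⟩).2
      intro hcon'
      linarith
    simp only [Stmt3Aux.logit]
    exact (((hφc.log hpos).sub ((continuousOn_const.sub hφc).log hlt1)).sub
      continuousOn_const).add continuousOn_const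
  -- product integrand measurable/integrable helper
  have hprodint : ∀ x, a < x → x ≤ zρ → IntervalIntegrable
      (fun u => logit ρ (φH u) * (Dw u - φH u)) volume x zρ := by
    intro x hx hxz
    rw [intervalIntegrable_iff_integrableOn_Ioc_of_le hxz, integrableOn_Ioc_iff_integrableOn_Ioo]
    obtain ⟨K, hK⟩ := isCompact_Icc.exists_bound_of_continuousOn (hψcont x hx)
    have hsubs : Ioo x zρ ⊆ s := fun u hu => ⟨(hx.trans hu.1).le, hu.2.le.trans hzb.le⟩
    have hmeas : AEStronglyMeasurable (fun u => logit ρ (φH u) * (Dw u - φH u))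
        (volume.restrict (Ioo x zρ)) := by
      refine AEStronglyMeasurable.mul ?_ (AEStronglyMeasurable.sub ?_ ?_)
      · exact ((hψcont x hx).mono Ioo_subset_Icc_self).aestronglyMeasurable measurableSet_Ioo
      · have h1 : AEStronglyMeasurable (deriv w) (volume.restrict (Ioo x zρ)) :=
          (measurable_deriv w).aestronglyMeasurable
        apply h1.congr
        filter_upwards [ae_restrict_mem measurableSet_Ioo] with u hu
        exact (hwHD u ⟨hx.trans hu.1, hu.2.trans hzb⟩).2
      · exact (hφcont.mono hsubs).aestronglyMeasurable measurableSet_Ioo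
    apply Integrable.mono' (integrableOn_const measure_Ioo_lt_top.ne :
      IntegrableOn (fun _ => K * 2) _ _) hmeas
    filter_upwards [ae_restrict_mem measurableSet_Ioo] with u hu
    have hus : u ∈ s := hsubs hu
    have h1 : |logit ρ (φH u)| ≤ K := by
      have := hK u (Ioo_subset_Icc_self hu)
      rwa [Real.norm_eq_abs] at this
    have h2 : |Dw u - φH u| ≤ 2 := by
      have ha1 := hDwmem u hus
      have ha2 := hφnonneg u hus
      have ha3 : φH u ≤ 1 := ((hφle u hus hu.2.le).trans hρ1.le)
      rw [abs_le]
      refine ⟨by linarith [ha1.1], by linarith [ha1.2]⟩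
    rw [Real.norm_eq_abs, abs_mul]
    have hK0 : 0 ≤ K := (abs_nonneg _).trans h1
    exact mul_le_mul h1 h2 (abs_nonneg _) hK0
  have hIIG : ∀ x, a < x → x ≤ zρ → IntervalIntegrable G volume x zρ := by
    intro x hx hxz
    have h1 := hIIw x zρ hx.le hxz hzb.le
    have h2 : IntervalIntegrable (fun u => hRho ρ (φH u)) volume x zρ :=
      ContinuousOn.intervalIntegrable (by
        rw [uIcc_of_le hxz]
        exact hgφcont.mono (Icc_subset_Icc hx.le hzb.le))
    exact (h1.sub h2).sub (hprodint x hx hxz)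
  set C : ℝ → ℝ := fun c => ∫ u in c..zρ, G u with hCdef
  have hC0 : ∀ c ∈ Ioo a zρ, 0 ≤ C c := by
    intro c hc
    exact intervalIntegral.integral_nonneg hc.2.le (fun u hu =>
      hG0 u ⟨hc.1.trans_le hu.1, hu.2⟩)
  have hCmono : ∀ c c', a < c → c ≤ c' → c' ≤ zρ → C c' ≤ C c := by
    intro c c' hac hcc' hc'z
    have hIa : IntervalIntegrable G volume c c' :=
      (hIIG c hac (hcc'.trans hc'z)).mono_set (by
        rw [uIcc_of_le hcc', uIcc_of_le (hcc'.trans hc'z)]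
        exact Icc_subset_Icc le_rfl hc'z)
    have hIb : IntervalIntegrable G volume c' zρ := hIIG c' (hac.trans_le hcc') hc'z
    have := intervalIntegral.integral_add_adjacent_intervals hIa hIb
    have hnn : 0 ≤ ∫ u in c..c', G u :=
      intervalIntegral.integral_nonneg hcc' (fun u hu =>
        hG0 u ⟨hac.trans_le hu.1, hu.2.trans hc'z⟩)
    simp only [hCdef]
    linarith [this]
  have hkey : ∀ c ∈ Ioo a zρ, C c + B ≤ (M + 1) * (c - a) + K₀ * H c := by
    intro c hc
    obtain ⟨hac, hcz⟩ := hc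
    have hcs : c ∈ s := ⟨hac.le, hcz.le.trans hzb.le⟩
    have hsub : Icc c zρ ⊆ s := Icc_subset_Icc hac.le hzb.le
    have hclampmem : ∀ u : ℝ, max c (min u zρ) ∈ Icc c zρ :=
      fun u => ⟨le_max_left _ _, max_le hcz.le (min_le_right _ _)⟩
    have hφclamp_pos : ∀ u : ℝ, 0 < φH (max c (min u zρ)) := fun u =>
      hφpos _ ⟨hac.trans_le (hclampmem u).1, ((hclampmem u).2.trans hzb.le)⟩
    have hφclamp_lt1 : ∀ u : ℝ, φH (max c (min u zρ)) < 1 := fun u =>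
      lt_of_le_of_lt (hφle _ (hsub (hclampmem u)) (hclampmem u).2) hρ1
    have hφclampcont : Continuous (fun u => φH (max c (min u zρ))) :=
      hφcont.comp_continuous
        (continuous_const.max (continuous_id.min continuous_const))
        (fun u => hsub (hclampmem u))
    have hΨcont : Continuous (fun u => logit ρ (φH (max c (min u zρ)))) := by
      simp only [Stmt3Aux.logit]
      exact (((hφclampcont.log (fun u => (hφclamp_pos u).ne')).sub
        ((continuous_const.sub hφclampcont).log
          (fun u => (sub_pos.mpr (hφclamp_lt1 u)).ne'))).sub continuous_const).add
        continuous_const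
    have hΨmono : Monotone (fun u => logit ρ (φH (max c (min u zρ)))) := by
      intro x y hxy
      have hcl : max c (min x zρ) ≤ max c (min y zρ) :=
        max_le_max le_rfl (min_le_min hxy le_rfl)
      have hpq := hφmono (hsub (hclampmem x)) (hsub (hclampmem y)) hcl
      have hp0 := hφclamp_pos x
      have hq0 := hφclamp_pos y
      have hp1 := hφclamp_lt1 x
      have hq1 := hφclamp_lt1 y
      have l1 : Real.log (φH (max c (min x zρ))) ≤ Real.log (φH (max c (min y zρ))) :=
        Real.log_le_log hp0 hpq
      have l2 : Real.log (1 - φH (max c (min y zρ))) ≤ Real.log (1 - φH (max c (min x zρ))) :=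
        Real.log_le_log (by linarith) (by linarith)
      simp only [Stmt3Aux.logit]
      linarith
    set Ψ : StieltjesFunction ℝ :=
      ⟨fun u => logit ρ (φH (max c (min u zρ))), hΨmono,
        fun x => hΨcont.continuousWithinAt⟩ with hΨdef
    have hΨval : ∀ u ∈ Icc c zρ, Ψ u = logit ρ (φH u) := by
      intro u hu
      show logit ρ (φH (max c (min u zρ))) = _
      rw [min_eq_left hu.2, max_eq_right hu.1]
    have hΨz : Ψ zρ = 0 := by
      rw [hΨval zρ ⟨hcz.le, le_rfl⟩, hz', logit_self]
    have hioosub : Ioo c zρ ⊆ Ioo a b := fun u hu => ⟨hac.trans hu.1, hu.2.trans hzb⟩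
    have hf'eq : ∀ u ∈ Ioo c zρ, deriv w u - deriv H u = Dw u - φH u := by
      intro u hu
      rw [(hwHD u (hioosub hu)).2, (hφHD u (hioosub hu)).2]
    have hibp : Ψ c * (- (w c - H c)) ≤
        ∫ u in Ioo c zρ, Ψ u * (deriv w u - deriv H u) := by
      apply stieltjes_ibp_ineq hcz Ψ hΨz
        (f := fun u => w u - H u) (f' := fun u => deriv w u - deriv H u)
        (g := fun u => max (-1) (min 1 (deriv w u - deriv H u)))
      · exact (hwdiff.continuousOn.mono hsub).sub (hHC1.continuousOn.mono hsub)
      · intro x hx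
        have h1 := (hwHD x (hioosub hx)).1
        have h2 := (hφHD x (hioosub hx)).1
        have h3 := h1.sub h2
        rw [hf'eq x hx]
        exact h3
      · exact Measurable.max measurable_const (Measurable.min measurable_const
          ((measurable_deriv w).sub (measurable_deriv H)))
      · intro x
        exact abs_le.mpr ⟨le_max_left _ _, max_le (by norm_num) (min_le_left _ _)⟩
      · filter_upwards [ae_restrict_mem measurableSet_Ioo] with x hx
        have hxs : x ∈ s := Ioo_subset_Icc_self (hioosub hx)
        have hd1 := hDwmem x hxs
        have he := hf'eq x hx
        rw [he, min_eq_right (by linarith [hd1.2, hφnonneg x hxs] : Dw x - φH x ≤ 1),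
          max_eq_right (by linarith [hd1.1, hφle x hxs hx.2.le, hρ1] : (-1:ℝ) ≤ Dw x - φH x)]
      · exact fun x hx => sub_nonpos.mpr (hwle x (hsub hx))
    have hT : ∫ u in c..zρ, logit ρ (φH u) * (Dw u - φH u) =
        ∫ u in Ioo c zρ, Ψ u * (deriv w u - deriv H u) := by
      rw [intervalIntegral.integral_of_le hcz.le, integral_Ioc_eq_integral_Ioo]
      apply setIntegral_congr_fun measurableSet_Ioo
      intro u hu
      show logit ρ (φH u) * (Dw u - φH u) = Ψ u * (deriv w u - deriv H u)
      rw [hΨval u (Ioo_subset_Icc_self hu), hf'eq u hu]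
    have hIIψ := hprodint c hac hcz.le
    have hIIgφ : IntervalIntegrable (fun u => hRho ρ (φH u)) volume c zρ :=
      ContinuousOn.intervalIntegrable (by
        rw [uIcc_of_le hcz.le]; exact hgφcont.mono hsub)
    have hIIgφ' : IntervalIntegrable (fun u => hRho ρ (φH u)) volume a c :=
      ContinuousOn.intervalIntegrable (by
        rw [uIcc_of_le hac.le]
        exact hgφcont.mono (Icc_subset_Icc le_rfl (hcz.le.trans hzb.le)))
    have hCeq : C c = (∫ u in c..zρ, hRho ρ (Dw u)) - (∫ u in c..zρ, hRho ρ (φH u))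
        - ∫ u in c..zρ, logit ρ (φH u) * (Dw u - φH u) := by
      simp only [hCdef, hGdef]
      rw [intervalIntegral.integral_sub ((hIIw c zρ hac.le hcz.le hzb.le).sub hIIgφ) hIIψ,
          intervalIntegral.integral_sub (hIIw c zρ hac.le hcz.le hzb.le) hIIgφ]
    have hacint : 0 ≤ ∫ u in a..c, hRho ρ (Dw u) :=
      intervalIntegral.integral_nonneg hac.le (fun u hu =>
        hRho_nonneg hρ0 hρ1 (hDwmem u ⟨hu.1, hu.2.trans (hcz.le.trans hzb.le)⟩))
    have he1 : ∫ u in a..c, hRho ρ (φH u) ≤ M * (c - a) := by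
      have hb := intervalIntegral.norm_integral_le_of_norm_le_const (C := M)
        (f := fun u => hRho ρ (φH u)) (a := a) (b := c) (fun x hx => by
          rw [Set.uIoc_of_le hac.le] at hx
          have hxs : x ∈ s := ⟨hx.1.le, hx.2.trans (hcz.le.trans hzb.le)⟩
          rw [Real.norm_eq_abs]
          exact abs_hRho_le hρ0 hρ1 ⟨hφnonneg x hxs, (hφle x hxs (hx.2.trans hcz.le)).trans hρ1.le⟩)
      calc ∫ u in a..c, hRho ρ (φH u) ≤ |∫ u in a..c, hRho ρ (φH u)| := le_abs_self _
        _ = ‖∫ u in a..c, hRho ρ (φH u)‖ := (Real.norm_eq_abs _).symm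
        _ ≤ M * |c - a| := hb
        _ = M * (c - a) := by rw [abs_of_nonneg (sub_nonneg.mpr hac.le)]
    have he2 : Ψ c * (w c - H c) ≤ (c - a) + K₀ * H c := by
      rw [hΨval c ⟨le_rfl, hcz.le⟩]
      have hp0 : 0 < φH c := hφpos c ⟨hac, hcz.le.trans hzb.le⟩
      have hpρ : φH c ≤ ρ := hφle c hcs hcz.le
      have hlp : Real.log (φH c) ≤ 0 := Real.log_nonpos hp0.le (hpρ.trans hρ1.le)
      have hl1p : Real.log (1 - φH c) ≤ 0 :=
        Real.log_nonpos (by linarith) (by linarith)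
      have hq0 : 0 ≤ H c - w c := sub_nonneg.mpr (hwle c hcs)
      have hqH : H c - w c ≤ H c := by linarith [hw0 c hcs]
      have hHc0 : 0 ≤ H c := hH0 c hcs
      have hslope : (H c - H a) / (c - a) ≤ φH c := by
        have := hHconv.convexOn.slope_le_derivWithin ha hcs hac (hHdiff c hcs)
        rwa [slope_def_field] at this
      have hHcle : H c ≤ (c - a) * φH c := by
        rw [hHa, sub_zero] at hslope
        have h := mul_le_mul_of_nonneg_right hslope (le_of_lt (sub_pos.mpr hac))
        rwa [div_mul_cancel₀ _ (ne_of_gt (sub_pos.mpr hac)), mul_comm] at h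
      have hplog := mul_log_mem hp0.le (hpρ.trans hρ1.le)
      have hkey2 : (- Real.log (φH c)) * H c ≤ c - a := by
        have h1 : (- Real.log (φH c)) * H c ≤ (- Real.log (φH c)) * ((c - a) * φH c) :=
          mul_le_mul_of_nonneg_left hHcle (by linarith)
        nlinarith [hplog.1, sub_pos.mpr hac]
      have hlogitle : - logit ρ (φH c) ≤ - Real.log (φH c) + K₀ := by
        simp only [Stmt3Aux.logit, hK₀def]
        have : Real.log ρ ≤ 0 := Real.log_nonpos hρ0.le hρ1.le
        linarith
      have hrw : logit ρ (φH c) * (w c - H c) = (- logit ρ (φH c)) * (H c - w c) := by ring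
      rw [hrw]
      calc (- logit ρ (φH c)) * (H c - w c)
          ≤ (- Real.log (φH c) + K₀) * (H c - w c) :=
            mul_le_mul_of_nonneg_right hlogitle hq0
        _ = (- Real.log (φH c)) * (H c - w c) + K₀ * (H c - w c) := by ring
        _ ≤ (- Real.log (φH c)) * (H c) + K₀ * (H c) := by
            have b1 : (- Real.log (φH c)) * (H c - w c) ≤ (- Real.log (φH c)) * H c :=
              mul_le_mul_of_nonneg_left hqH (by linarith)
            have b2 : K₀ * (H c - w c) ≤ K₀ * H c := mul_le_mul_of_nonneg_left hqH hK₀0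
            linarith
        _ ≤ (c - a) + K₀ * H c := by linarith [hkey2]
    have hw_eq := hcostw c ⟨hac, hcz⟩
    have hsplitv : cost ρ a b v =
        (∫ u in a..c, hRho ρ (φH u)) + ∫ u in c..zρ, hRho ρ (φH u) := by
      rw [hcostv, ← intervalIntegral.integral_add_adjacent_intervals hIIgφ' hIIgφ]
    have hfc : - (w c - H c) = H c - w c := by ring
    rw [hfc] at hibp
    have hibp' : - (∫ u in c..zρ, logit ρ (φH u) * (Dw u - φH u)) ≤ Ψ c * (w c - H c) := by
      rw [hT]
      nlinarith [hibp]
    linarith [hibp', he1, he2, hacint, hCeq, hw_eq, hsplitv, hcon]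
  -- limit argument: C c + B → forced to be ≤ 0
  set l : Filter ℝ := nhdsWithin a (Ioo a zρ) with hldef
  haveI hlne : l.NeBot := by
    rw [hldef]
    exact mem_closure_iff_nhdsWithin_neBot.mp (by
      rw [closure_Ioo hza.ne]; exact left_mem_Icc.mpr hza.le)
  have htend : Filter.Tendsto (fun c => (M + 1) * (c - a) + K₀ * H c) l (nhds 0) := by
    have h1 : Filter.Tendsto (fun c : ℝ => c - a) l (nhds 0) := by
      have h0 : Filter.Tendsto (fun c : ℝ => c - a) (nhds a) (nhds (a - a)) :=
        (continuous_id.sub continuous_const).tendsto a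
      rw [sub_self] at h0
      exact h0.mono_left nhdsWithin_le_nhds
    have h2 : Filter.Tendsto H l (nhds 0) := by
      have hca : Filter.Tendsto H (nhdsWithin a s) (nhds (H a)) := (hHC1.continuousOn) a ha
      rw [hHa] at hca
      exact hca.mono_left (nhdsWithin_mono a (fun x hx => ⟨hx.1.le, hx.2.le.trans hzb.le⟩))
    have h3 := (h1.const_mul (M + 1)).add (h2.const_mul K₀)
    simpa using h3
  have hev : ∀ᶠ c in l, c ∈ Ioo a zρ := self_mem_nhdsWithin
  have hCB0 : ∀ c₀ ∈ Ioo a zρ, C c₀ + B ≤ 0 := by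
    intro c₀ hc₀
    have hevlt : ∀ᶠ c in l, c < c₀ :=
      Filter.Eventually.filter_mono nhdsWithin_le_nhds (eventually_lt_nhds hc₀.1)
    refine ge_of_tendsto htend ?_
    filter_upwards [hev, hevlt] with c hc hlt
    calc C c₀ + B ≤ C c + B := by linarith [hCmono c c₀ hc.1 hlt.le hc₀.2.le]
      _ ≤ _ := hkey c hc
  have hBzero : B = 0 := by
    have h := hCB0 ((a + zρ)/2) ⟨by linarith, by linarith⟩
    have h2 := hC0 ((a + zρ)/2) ⟨by linarith, by linarith⟩
    linarith
  have hCzero : ∀ c ∈ Ioo a zρ, C c = 0 := fun c hc =>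
    le_antisymm (by linarith [hCB0 c hc, hB0]) (hC0 c hc)
  -- a.e. identities for the derivative of w
  have haeB : ∀ᵐ u ∂(volume.restrict (Ioo zρ b)), Dw u = ρ := by
    have hint : IntegrableOn (fun u => hRho ρ (Dw u)) (Ioo zρ b) := by
      have h := hIIw zρ b hza.le hzb.le le_rfl
      rwa [intervalIntegrable_iff_integrableOn_Ioc_of_le hzb.le,
        integrableOn_Ioc_iff_integrableOn_Ioo] at h
    have hz0 : ∫ u in Ioo zρ b, hRho ρ (Dw u) = 0 := by
      have hb : B = ∫ u in Ioo zρ b, hRho ρ (Dw u) := by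
        rw [hBdef, intervalIntegral.integral_of_le hzb.le, integral_Ioc_eq_integral_Ioo]
      rw [← hb, hBzero]
    have hnn : 0 ≤ᵐ[volume.restrict (Ioo zρ b)] (fun u => hRho ρ (Dw u)) := by
      filter_upwards [ae_restrict_mem measurableSet_Ioo] with u hu
      exact hRho_nonneg hρ0 hρ1 (hDwmem u ⟨hza.le.trans hu.1.le, hu.2.le⟩)
    have hzero := (integral_eq_zero_iff_of_nonneg_ae hnn hint).mp hz0
    filter_upwards [hzero, ae_restrict_mem measurableSet_Ioo] with u hu hu2
    by_contra hne
    exact (hRho_pos hρ0 hρ1 (hDwmem u ⟨hza.le.trans hu2.1.le, hu2.2.le⟩) hne).ne' hu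
  have haeC : ∀ c ∈ Ioo a zρ, ∀ᵐ u ∂(volume.restrict (Ioo c zρ)), Dw u = φH u := by
    intro c hc
    have hint : IntegrableOn G (Ioo c zρ) := by
      have h := hIIG c hc.1 hc.2.le
      rwa [intervalIntegrable_iff_integrableOn_Ioc_of_le hc.2.le,
        integrableOn_Ioc_iff_integrableOn_Ioo] at h
    have hz0 : ∫ u in Ioo c zρ, G u = 0 := by
      have h := hCzero c hc
      simp only [hCdef] at h
      rwa [intervalIntegral.integral_of_le hc.2.le, integral_Ioc_eq_integral_Ioo] at h
    have hnn : 0 ≤ᵐ[volume.restrict (Ioo c zρ)] G := by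
      filter_upwards [ae_restrict_mem measurableSet_Ioo] with u hu
      exact hG0 u ⟨hc.1.trans hu.1, hu.2.le⟩
    have hzero := (integral_eq_zero_iff_of_nonneg_ae hnn hint).mp hz0
    filter_upwards [hzero, ae_restrict_mem measurableSet_Ioo] with u hu hu2
    by_contra hne
    exact (hGpos u ⟨hc.1.trans hu2.1, hu2.2.le⟩ hne).ne' hu
  -- interval integrability of deriv w and deriv v
  have hIIdw : ∀ x y, a ≤ x → x ≤ y → y ≤ b → IntervalIntegrable (deriv w) volume x y := by
    intro x y hax hxy hyb
    rw [intervalIntegrable_iff_integrableOn_Ioc_of_le hxy, integrableOn_Ioc_iff_integrableOn_Ioo]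
    apply Integrable.mono' (integrableOn_const measure_Ioo_lt_top.ne :
      IntegrableOn (fun _ => (1:ℝ)) _ _) (measurable_deriv w).aestronglyMeasurable
    filter_upwards [ae_restrict_mem measurableSet_Ioo] with u hu
    have hu' : u ∈ Ioo a b := ⟨hax.trans_lt hu.1, hu.2.trans_le hyb⟩
    rw [Real.norm_eq_abs, (hwHD u hu').2]
    have hm := hDwmem u (Ioo_subset_Icc_self hu')
    rw [abs_le]
    exact ⟨by linarith [hm.1], hm.2⟩
  have hIIdv : ∀ x y, a ≤ x → x ≤ y → y ≤ b → IntervalIntegrable (deriv v) volume x y := by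
    intro x y hax hxy hyb
    rw [intervalIntegrable_iff_integrableOn_Ioc_of_le hxy, integrableOn_Ioc_iff_integrableOn_Ioo]
    apply Integrable.mono' (integrableOn_const measure_Ioo_lt_top.ne :
      IntegrableOn (fun _ => (1:ℝ)) _ _) (measurable_deriv v).aestronglyMeasurable
    filter_upwards [ae_restrict_mem measurableSet_Ioo] with u hu
    have hu' : u ∈ Ioo a b := ⟨hax.trans_lt hu.1, hu.2.trans_le hyb⟩
    rw [Real.norm_eq_abs, (hvHD u hu').2]
    have hm := hVmem u (Ioo_subset_Icc_self hu')
    rw [abs_le]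
    exact ⟨by linarith [hm.1], hm.2⟩
  have hva : v a = 0 := by simp [hv, hza.le, hHa]
  -- a.e. equality of derivatives on the two regions
  have haew1 : ∀ c z, c ∈ Ioo a zρ → z ≤ zρ →
      ∀ᵐ u ∂(volume.restrict (Ioo c z)), deriv w u = deriv v u := by
    intro c z hc hzz
    have hae := haeC c hc
    have hae' := ae_restrict_of_ae_restrict_of_subset (Ioo_subset_Ioo le_rfl hzz) hae
    filter_upwards [hae', ae_restrict_mem measurableSet_Ioo] with u hu hu2
    have hu' : u ∈ Ioo a b := ⟨hc.1.trans hu2.1, (hu2.2.trans_le hzz).trans_le hzb.le⟩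
    rw [(hwHD u hu').2, (hvHD u hu').2, hu]
    simp only [hV]
    rw [if_pos (hu2.2.le.trans hzz)]
  have haew2 : ∀ z, z ≤ b →
      ∀ᵐ u ∂(volume.restrict (Ioo zρ z)), deriv w u = deriv v u := by
    intro z h2
    have hae' := ae_restrict_of_ae_restrict_of_subset (Ioo_subset_Ioo le_rfl h2) haeB
    filter_upwards [hae', ae_restrict_mem measurableSet_Ioo] with u hu hu2
    have hu' : u ∈ Ioo a b := ⟨hza.trans hu2.1, hu2.2.trans_le h2⟩
    rw [(hwHD u hu').2, (hvHD u hu').2, hu]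
    simp only [hV]
    rw [if_neg (not_le.mpr hu2.1)]
  have hcongr : ∀ y z, y ≤ z →
      (∀ᵐ u ∂(volume.restrict (Ioo y z)), deriv w u = deriv v u) →
      ∫ u in y..z, deriv w u = ∫ u in y..z, deriv v u := by
    intro y z hyz hae
    rw [intervalIntegral.integral_of_le hyz, intervalIntegral.integral_of_le hyz,
        integral_Ioc_eq_integral_Ioo, integral_Ioc_eq_integral_Ioo]
    exact integral_congr_ae hae
  -- w = v everywhere on Icc a b
  have hweqv : ∀ x ∈ Icc a b, w x = v x := by
    intro x hxs'
    rcases eq_or_lt_of_le hxs'.1 with heq | hax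
    · rw [← heq, hwa, hva]
    have hwint : w x = ∫ u in a..x, deriv w u := by
      have h := intervalIntegral.integral_eq_sub_of_hasDeriv_right_of_le hax.le
        (hwdiff.continuousOn.mono (Icc_subset_Icc le_rfl hxs'.2))
        (fun u hu => by
          have hu' : u ∈ Ioo a b := ⟨hu.1, hu.2.trans_le hxs'.2⟩
          rw [(hwHD u hu').2]
          exact (hwHD u hu').1.hasDerivWithinAt)
        (hIIdw a x le_rfl hax.le hxs'.2)
      rw [hwa, sub_zero] at h
      exact h.symm
    have hvint : v x = ∫ u in a..x, deriv v u := by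
      have h := intervalIntegral.integral_eq_sub_of_hasDeriv_right_of_le hax.le
        (hvdiff.continuousOn.mono (Icc_subset_Icc le_rfl hxs'.2))
        (fun u hu => by
          have hu' : u ∈ Ioo a b := ⟨hu.1, hu.2.trans_le hxs'.2⟩
          rw [(hvHD u hu').2]
          exact (hvHD u hu').1.hasDerivWithinAt)
        (hIIdv a x le_rfl hax.le hxs'.2)
      rw [hva, sub_zero] at h
      exact h.symm
    have hbound : ∀ c ∈ Ioo a (min x zρ), |w x - v x| ≤ 2 * (c - a) := by
      intro c hc
      have hcx : c < x := hc.2.trans_le (min_le_left _ _)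
      have hcz : c < zρ := hc.2.trans_le (min_le_right _ _)
      have hsw := intervalIntegral.integral_add_adjacent_intervals
        (hIIdw a c le_rfl hc.1.le (hcx.le.trans hxs'.2)) (hIIdw c x hc.1.le hcx.le hxs'.2)
      have hsv := intervalIntegral.integral_add_adjacent_intervals
        (hIIdv a c le_rfl hc.1.le (hcx.le.trans hxs'.2)) (hIIdv c x hc.1.le hcx.le hxs'.2)
      have htail : ∫ u in c..x, deriv w u = ∫ u in c..x, deriv v u := by
        rcases le_or_gt x zρ with hxz | hzx
        · exact hcongr c x hcx.le (haew1 c x ⟨hc.1, hcz⟩ hxz)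
        · have s1 := intervalIntegral.integral_add_adjacent_intervals
            (hIIdw c zρ hc.1.le hcz.le hzb.le) (hIIdw zρ x hza.le hzx.le hxs'.2)
          have s2 := intervalIntegral.integral_add_adjacent_intervals
            (hIIdv c zρ hc.1.le hcz.le hzb.le) (hIIdv zρ x hza.le hzx.le hxs'.2)
          rw [← s1, ← s2, hcongr c zρ hcz.le (haew1 c zρ ⟨hc.1, hcz⟩ le_rfl),
              hcongr zρ x hzx.le (haew2 x hxs'.2)]
      have hd := intervalIntegral.integral_sub
        (hIIdw a c le_rfl hc.1.le (hcx.le.trans hxs'.2))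
        (hIIdv a c le_rfl hc.1.le (hcx.le.trans hxs'.2))
      have hb := intervalIntegral.norm_integral_le_of_norm_le_const (C := 2)
        (f := fun u => deriv w u - deriv v u) (a := a) (b := c) (fun u hu => by
          rw [Set.uIoc_of_le hc.1.le] at hu
          have hu' : u ∈ Ioo a b := ⟨hu.1, lt_of_le_of_lt hu.2 (hcx.trans_le hxs'.2)⟩
          show ‖deriv w u - deriv v u‖ ≤ 2
          rw [Real.norm_eq_abs, (hwHD u hu').2, (hvHD u hu').2]
          have h1 := hDwmem u (Ioo_subset_Icc_self hu')
          have h2 := hVmem u (Ioo_subset_Icc_self hu')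
          rw [abs_le]
          exact ⟨by linarith [h1.1, h2.2], by linarith [h1.2, h2.1]⟩)
      have heq2 : w x - v x = (∫ u in a..c, deriv w u) - ∫ u in a..c, deriv v u := by
        rw [hwint, hvint, ← hsw, ← hsv, htail]
        ring
      rw [heq2, ← hd]
      calc |∫ u in a..c, (deriv w u - deriv v u)| =
            ‖∫ u in a..c, (deriv w u - deriv v u)‖ := (Real.norm_eq_abs _).symm
        _ ≤ 2 * |c - a| := hb
        _ = 2 * (c - a) := by rw [abs_of_nonneg (sub_nonneg.mpr hc.1.le)]
    have hminax : a < min x zρ := lt_min hax hza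
    have hlim2 : Filter.Tendsto (fun c : ℝ => 2 * (c - a))
        (nhdsWithin a (Ioo a (min x zρ))) (nhds 0) := by
      have h0 : Filter.Tendsto (fun c : ℝ => 2 * (c - a)) (nhds a) (nhds (2 * (a - a))) :=
        (continuous_const.mul (continuous_id.sub continuous_const)).tendsto a
      rw [sub_self, mul_zero] at h0
      exact h0.mono_left nhdsWithin_le_nhds
    haveI : (nhdsWithin a (Ioo a (min x zρ))).NeBot :=
      mem_closure_iff_nhdsWithin_neBot.mp (by
        rw [closure_Ioo hminax.ne]; exact left_mem_Icc.mpr hminax.le)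
    have habs : |w x - v x| ≤ 0 := by
      refine ge_of_tendsto hlim2 ?_
      filter_upwards [self_mem_nhdsWithin] with c hc
      exact hbound c hc
    have : w x - v x = 0 := abs_eq_zero.mp (le_antisymm habs (abs_nonneg _))
    linarith
  exact hu₀ne (hweqv u₀ hu₀s)
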